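/- For the choice f(t,s) = t·s/(t+s), the mean E_n of μ_n satisfies E_{n+1} ≤ (5/2)·E_n for every n, and E_n ≤ (89/60)·(5/2)ⁿ for every n ≥ 1. -/

import Mathlib

open MeasureTheory Filter

noncomputable def Fq : ℝ × ℝ → ℝ := fun q => q.1 * q.2 / (q.1 + q.2)

lemma measurable_Fq : Measurable Fq :=
  (measurable_fst.mul measurable_snd).div (measurable_fst.add measurable_snd)

lemma Fq_nonneg {c d : ℝ} (hc : 1 ≤ c) (hd : 1 ≤ d) : 0 ≤ Fq (c, d) := by
  have h1 : (0:ℝ) < c := by linarith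
  have h2 : (0:ℝ) < d := by linarith
  exact div_nonneg (by positivity) (by positivity)

lemma Fq_le {c d : ℝ} (hc : 1 ≤ c) (hd : 1 ≤ d) : Fq (c, d) ≤ (c + d) / 4 := by
  have h : (0:ℝ) < c + d := by linarith
  rw [Fq, div_le_div_iff₀ h (by norm_num)]
  nlinarith [sq_nonneg (c - d)]

section Helpers

variable {μ ν : Measure ℝ} [IsProbabilityMeasure μ] [IsProbabilityMeasure ν]

lemma map_fst' : Measure.map Prod.fst (μ.prod ν) = μ := by
  rw [Measure.map_fst_prod]; simp

lemma map_snd' : Measure.map Prod.snd (μ.prod ν) = ν := by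
  rw [Measure.map_snd_prod]; simp

lemma integrable_fst' (hi : Integrable id μ) :
    Integrable (fun p : ℝ × ℝ => p.1) (μ.prod ν) := by
  have h := (integrable_map_measure (μ := μ.prod ν) (f := Prod.fst) (g := id)
    aestronglyMeasurable_id measurable_fst.aemeasurable).mp (by rwa [map_fst'])
  exact h

lemma integrable_snd' (hi : Integrable id ν) :
    Integrable (fun p : ℝ × ℝ => p.2) (μ.prod ν) := by
  have h := (integrable_map_measure (μ := μ.prod ν) (f := Prod.snd) (g := id)
    aestronglyMeasurable_id measurable_snd.aemeasurable).mp (by rwa [map_snd'])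
  exact h

lemma integral_fst' : ∫ p, p.1 ∂(μ.prod ν) = ∫ x, x ∂μ := by
  have h := integral_map (μ := μ.prod ν) (φ := Prod.fst) measurable_fst.aemeasurable
    (f := fun x : ℝ => x) (by rw [map_fst']; exact aestronglyMeasurable_id)
  rw [map_fst'] at h
  exact h.symm

lemma integral_snd' : ∫ p, p.2 ∂(μ.prod ν) = ∫ x, x ∂ν := by
  have h := integral_map (μ := μ.prod ν) (φ := Prod.snd) measurable_snd.aemeasurable
    (f := fun x : ℝ => x) (by rw [map_snd']; exact aestronglyMeasurable_id)
  rw [map_snd'] at h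
  exact h.symm

lemma ae_fst' {P : ℝ → Prop} (h : ∀ᵐ x ∂μ, P x) : ∀ᵐ p ∂(μ.prod ν), P p.1 := by
  have := map_fst' (μ := μ) (ν := ν) ▸ h
  exact (Measure.tendsto_ae_map measurable_fst.aemeasurable).eventually this

lemma ae_snd' {P : ℝ → Prop} (h : ∀ᵐ x ∂ν, P x) : ∀ᵐ p ∂(μ.prod ν), P p.2 := by
  have := map_snd' (μ := μ) (ν := ν) ▸ h
  exact (Measure.tendsto_ae_map measurable_snd.aemeasurable).eventually this

/-- Integrability of the `Fq` term on a product of supported measures. -/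
lemma integrable_Fq_prod (hiμ : Integrable id μ) (hiν : Integrable id ν)
    (hsμ : ∀ᵐ x ∂μ, 1 ≤ x) (hsν : ∀ᵐ x ∂ν, 1 ≤ x) :
    Integrable Fq (μ.prod ν) := by
  have hb : Integrable (fun p : ℝ × ℝ => (p.1 + p.2) / 4) (μ.prod ν) :=
    ((integrable_fst' hiμ).add (integrable_snd' hiν)).div_const 4
  refine hb.mono' measurable_Fq.aestronglyMeasurable ?_
  filter_upwards [ae_fst' hsμ, ae_snd' hsν] with p h1 h2
  rw [Real.norm_eq_abs, abs_of_nonneg (Fq_nonneg h1 h2)]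
  exact Fq_le h1 h2

lemma integral_Fq_le (hiμ : Integrable id μ) (hiν : Integrable id ν)
    (hsμ : ∀ᵐ x ∂μ, 1 ≤ x) (hsν : ∀ᵐ x ∂ν, 1 ≤ x) :
    ∫ p, Fq p ∂(μ.prod ν) ≤ ((∫ x, x ∂μ) + ∫ x, x ∂ν) / 4 := by
  have hb : Integrable (fun p : ℝ × ℝ => (p.1 + p.2) / 4) (μ.prod ν) :=
    ((integrable_fst' hiμ).add (integrable_snd' hiν)).div_const 4
  have h1 : ∫ p, Fq p ∂(μ.prod ν) ≤ ∫ p, (p.1 + p.2) / 4 ∂(μ.prod ν) := by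
    refine integral_mono_ae (integrable_Fq_prod hiμ hiν hsμ hsν) hb ?_
    filter_upwards [ae_fst' hsμ, ae_snd' hsν] with p hp1 hp2
    exact Fq_le hp1 hp2
  calc ∫ p, Fq p ∂(μ.prod ν) ≤ ∫ p, (p.1 + p.2) / 4 ∂(μ.prod ν) := h1
    _ = ((∫ x, x ∂μ) + ∫ x, x ∂ν) / 4 := by
        rw [integral_div, integral_add (integrable_fst' hiμ) (integrable_snd' hiν),
          integral_fst', integral_snd']

end Helpers

section Helpers2

variable {β : Type*} [MeasurableSpace β] {μ : Measure ℝ} {ν : Measure β}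
  [IsProbabilityMeasure μ] [IsProbabilityMeasure ν]

lemma map_fst2 : Measure.map Prod.fst (μ.prod ν) = μ := by
  rw [Measure.map_fst_prod]; simp

lemma map_snd2 : Measure.map Prod.snd (μ.prod ν) = ν := by
  rw [Measure.map_snd_prod]; simp

lemma integrable_fst2 (hi : Integrable id μ) :
    Integrable (fun p : ℝ × β => p.1) (μ.prod ν) := by
  have h := (integrable_map_measure (μ := μ.prod ν) (f := Prod.fst) (g := id)
    aestronglyMeasurable_id measurable_fst.aemeasurable).mp (by rwa [map_fst2])
  exact h

lemma integral_fst2 : ∫ p, p.1 ∂(μ.prod ν) = ∫ x, x ∂μ := by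
  have h := integral_map (μ := μ.prod ν) (φ := Prod.fst) measurable_fst.aemeasurable
    (f := fun x : ℝ => x) (by rw [map_fst2]; exact aestronglyMeasurable_id)
  rw [map_fst2] at h
  exact h.symm

lemma ae_fst2 {P : ℝ → Prop} (h : ∀ᵐ x ∂μ, P x) : ∀ᵐ p ∂(μ.prod ν), P p.1 := by
  have h2 := map_fst2 (μ := μ) (ν := ν) ▸ h
  exact (Measure.tendsto_ae_map measurable_fst.aemeasurable).eventually h2

lemma integrable_snd2 {f : β → ℝ} (h : Integrable f ν) :
    Integrable (fun p : ℝ × β => f p.2) (μ.prod ν) := by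
  have h2 := (integrable_map_measure (μ := μ.prod ν) (f := Prod.snd) (g := f)
    (by rw [map_snd2]; exact h.aestronglyMeasurable) measurable_snd.aemeasurable).mp
    (by rwa [map_snd2])
  exact h2

lemma integral_snd2 {f : β → ℝ} (hf : AEStronglyMeasurable f ν) :
    ∫ p, f p.2 ∂(μ.prod ν) = ∫ y, f y ∂ν := by
  have h := integral_map (μ := μ.prod ν) (φ := Prod.snd) measurable_snd.aemeasurable
    (f := f) (by rwa [map_snd2])
  rw [map_snd2] at h
  exact h.symm

lemma ae_snd2 {P : β → Prop} (h : ∀ᵐ y ∂ν, P y) : ∀ᵐ p ∂(μ.prod ν), P p.2 := by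
  have h2 := map_snd2 (μ := μ) (ν := ν) ▸ h
  exact (Measure.tendsto_ae_map measurable_snd.aemeasurable).eventually h2

end Helpers2

/-- The recursively defined sequence of measures: `μ₀ = (δ₁ + δ₂)/2` and `μ_{n+1}` is the
pushforward of `μ_n ⊗ μ_n ⊗ μ_n ⊗ μ_n` under `(a,b,c,d) ↦ a + b + f c d`. -/
noncomputable def mu (f : ℝ → ℝ → ℝ) : ℕ → Measure ℝ
  | 0 => (2 : ENNReal)⁻¹ • Measure.dirac 1 + (2 : ENNReal)⁻¹ • Measure.dirac 2
  | n + 1 =>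
      Measure.map (fun p : ℝ × ℝ × ℝ × ℝ => p.1 + p.2.1 + f p.2.2.1 p.2.2.2)
        ((mu f n).prod ((mu f n).prod ((mu f n).prod (mu f n))))

/-- The mean of `μ_n`. -/
noncomputable def En (f : ℝ → ℝ → ℝ) (n : ℕ) : ℝ := ∫ x, x ∂(mu f n)

noncomputable def G : ℝ × ℝ × ℝ × ℝ → ℝ := fun p => p.1 + p.2.1 + Fq p.2.2

lemma measurable_G : Measurable G :=
  (measurable_fst.add (measurable_fst.comp measurable_snd)).add
    (measurable_Fq.comp (measurable_snd.comp measurable_snd))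

lemma mu_zero (f : ℝ → ℝ → ℝ) :
    mu f 0 = (2 : ENNReal)⁻¹ • Measure.dirac 1 + (2 : ENNReal)⁻¹ • Measure.dirac 2 := by
  rw [mu]

lemma mu_succ (n : ℕ) :
    mu (fun t s => t * s / (t + s)) (n + 1) =
      Measure.map G ((mu (fun t s => t * s / (t + s)) n).prod
        ((mu (fun t s => t * s / (t + s)) n).prod
          ((mu (fun t s => t * s / (t + s)) n).prod (mu (fun t s => t * s / (t + s)) n)))) := by
  rw [mu]
  rfl

lemma integrable_dirac_any (h : ℝ → ℝ) (a : ℝ) : Integrable h (Measure.dirac a) := by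
  have he : h =ᵐ[Measure.dirac a] fun _ => h a := by
    rw [Filter.EventuallyEq, ae_dirac_eq]
    exact Filter.eventually_pure.mpr rfl
  exact (integrable_const (h a)).congr he.symm

lemma integrable_mu0 (f : ℝ → ℝ → ℝ) (h : ℝ → ℝ) : Integrable h (mu f 0) := by
  rw [mu_zero]
  exact ((integrable_dirac_any h 1).smul_measure (by norm_num)).add_measure
    ((integrable_dirac_any h 2).smul_measure (by norm_num))

lemma int_mu0 (f : ℝ → ℝ → ℝ) (h : ℝ → ℝ) : ∫ x, h x ∂(mu f 0) = (h 1 + h 2) / 2 := by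
  rw [mu_zero, integral_add_measure
    ((integrable_dirac_any h 1).smul_measure (by norm_num))
    ((integrable_dirac_any h 2).smul_measure (by norm_num)),
    integral_smul_measure, integral_smul_measure, integral_dirac, integral_dirac]
  simp
  ring

local notation "Fr" => (fun t s : ℝ => t * s / (t + s))

lemma main_facts : ∀ n : ℕ, IsProbabilityMeasure (mu Fr n) ∧
    (∀ᵐ x ∂(mu Fr n), 1 ≤ x) ∧ Integrable id (mu Fr n) := by
  intro n
  induction n with
  | zero =>
    refine ⟨⟨?_⟩, ?_, integrable_mu0 _ id⟩
    · rw [mu_zero]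
      simp [ENNReal.inv_two_add_inv_two]
    · rw [mu_zero]
      rw [ae_add_measure_iff, Measure.ae_ennreal_smul_measure_iff (by norm_num), Measure.ae_ennreal_smul_measure_iff (by norm_num),
        ae_dirac_eq, ae_dirac_eq]
      constructor
      · exact Filter.eventually_pure.mpr le_rfl
      · exact Filter.eventually_pure.mpr (by norm_num)
  | succ n ih =>
    obtain ⟨hp, hs, hi⟩ := ih
    haveI := hp
    rw [mu_succ]
    have hae1 : ∀ᵐ p ∂((mu Fr n).prod ((mu Fr n).prod ((mu Fr n).prod (mu Fr n)))),
        1 ≤ p.1 := ae_fst2 hs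
    have hae2 : ∀ᵐ p ∂((mu Fr n).prod ((mu Fr n).prod ((mu Fr n).prod (mu Fr n)))),
        1 ≤ p.2.1 := ae_snd2 (ae_fst2 hs)
    have hae3 : ∀ᵐ p ∂((mu Fr n).prod ((mu Fr n).prod ((mu Fr n).prod (mu Fr n)))),
        1 ≤ p.2.2.1 := ae_snd2 (ae_snd2 (ae_fst2 hs))
    have hae4 : ∀ᵐ p ∂((mu Fr n).prod ((mu Fr n).prod ((mu Fr n).prod (mu Fr n)))),
        1 ≤ p.2.2.2 := ae_snd2 (ae_snd2 (ae_snd2 hs))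
    have i1 : Integrable (fun p : ℝ × ℝ × ℝ × ℝ => p.1)
        ((mu Fr n).prod ((mu Fr n).prod ((mu Fr n).prod (mu Fr n)))) := integrable_fst2 hi
    have i2 : Integrable (fun p : ℝ × ℝ × ℝ × ℝ => p.2.1)
        ((mu Fr n).prod ((mu Fr n).prod ((mu Fr n).prod (mu Fr n)))) :=
      integrable_snd2 (f := fun q : ℝ × ℝ × ℝ => q.1) (integrable_fst2 hi)
    have iF : Integrable (fun p : ℝ × ℝ × ℝ × ℝ => Fq p.2.2)
        ((mu Fr n).prod ((mu Fr n).prod ((mu Fr n).prod (mu Fr n)))) :=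
      integrable_snd2 (f := fun q : ℝ × ℝ × ℝ => Fq q.2)
        (integrable_snd2 (f := Fq) (integrable_Fq_prod hi hi hs hs))
    have hiG : Integrable G ((mu Fr n).prod ((mu Fr n).prod ((mu Fr n).prod (mu Fr n)))) :=
      (i1.add i2).add iF
    refine ⟨Measure.isProbabilityMeasure_map measurable_G.aemeasurable, ?_, ?_⟩
    · rw [ae_map_iff measurable_G.aemeasurable (measurableSet_Ici (a := (1:ℝ)))]
      filter_upwards [hae1, hae2, hae3, hae4] with p h1 h2 h3 h4
      have h0 : 0 ≤ Fq p.2.2 := Fq_nonneg h3 h4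
      show (1:ℝ) ≤ p.1 + p.2.1 + Fq p.2.2
      linarith
    · exact (integrable_map_measure aestronglyMeasurable_id measurable_G.aemeasurable).mpr hiG

lemma En_succ (n : ℕ) : En Fr (n + 1) =
    En Fr n + En Fr n + ∫ q, Fq q ∂((mu Fr n).prod (mu Fr n)) := by
  obtain ⟨hp, hs, hi⟩ := main_facts n
  haveI := hp
  have i1 : Integrable (fun p : ℝ × ℝ × ℝ × ℝ => p.1)
      ((mu Fr n).prod ((mu Fr n).prod ((mu Fr n).prod (mu Fr n)))) := integrable_fst2 hi
  have i2 : Integrable (fun p : ℝ × ℝ × ℝ × ℝ => p.2.1)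
      ((mu Fr n).prod ((mu Fr n).prod ((mu Fr n).prod (mu Fr n)))) :=
    integrable_snd2 (f := fun q : ℝ × ℝ × ℝ => q.1) (integrable_fst2 hi)
  have iF : Integrable (fun p : ℝ × ℝ × ℝ × ℝ => Fq p.2.2)
      ((mu Fr n).prod ((mu Fr n).prod ((mu Fr n).prod (mu Fr n)))) :=
    integrable_snd2 (f := fun q : ℝ × ℝ × ℝ => Fq q.2)
      (integrable_snd2 (f := Fq) (integrable_Fq_prod hi hi hs hs))
  rw [En, mu_succ, integral_map (f := fun x : ℝ => x) measurable_G.aemeasurable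
    aestronglyMeasurable_id]
  have : ∫ p, G p ∂((mu Fr n).prod ((mu Fr n).prod ((mu Fr n).prod (mu Fr n)))) =
      (∫ p : ℝ × ℝ × ℝ × ℝ, p.1 ∂((mu Fr n).prod ((mu Fr n).prod ((mu Fr n).prod (mu Fr n)))))
      + (∫ p : ℝ × ℝ × ℝ × ℝ, p.2.1 ∂((mu Fr n).prod ((mu Fr n).prod ((mu Fr n).prod (mu Fr n)))))
      + ∫ p : ℝ × ℝ × ℝ × ℝ, Fq p.2.2 ∂((mu Fr n).prod ((mu Fr n).prod ((mu Fr n).prod (mu Fr n)))) := by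
    have i12 : Integrable (fun p : ℝ × ℝ × ℝ × ℝ => p.1 + p.2.1)
        ((mu Fr n).prod ((mu Fr n).prod ((mu Fr n).prod (mu Fr n)))) := i1.add i2
    rw [show G = (fun p : ℝ × ℝ × ℝ × ℝ => (p.1 + p.2.1) + Fq p.2.2) from rfl,
      integral_add i12 iF, integral_add i1 i2]
  rw [show (fun x : ℝ × ℝ × ℝ × ℝ => G x) = G from rfl, this]
  congr 1
  · congr 1
    · exact integral_fst2
    · rw [integral_snd2 (f := fun q : ℝ × ℝ × ℝ => q.1)
        measurable_fst.aestronglyMeasurable, integral_fst2]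
      rfl
  · rw [integral_snd2 (f := fun q : ℝ × ℝ × ℝ => Fq q.2)
      (measurable_Fq.comp measurable_snd).aestronglyMeasurable,
      integral_snd2 (f := Fq) measurable_Fq.aestronglyMeasurable]

lemma En_zero : En Fr 0 = 3 / 2 := by
  rw [En, int_mu0]
  norm_num

lemma part1 (n : ℕ) : En Fr (n + 1) ≤ (5 / 2) * En Fr n := by
  obtain ⟨hp, hs, hi⟩ := main_facts n
  haveI := hp
  have hle : ∫ q, Fq q ∂((mu Fr n).prod (mu Fr n)) ≤
      ((∫ x, x ∂(mu Fr n)) + ∫ x, x ∂(mu Fr n)) / 4 := integral_Fq_le hi hi hs hs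
  have hE : En Fr n = ∫ x, x ∂(mu Fr n) := rfl
  rw [En_succ, hE]
  linarith

lemma int_Fq_mu0 : ∫ q, Fq q ∂((mu Fr 0).prod (mu Fr 0)) = 17 / 24 := by
  obtain ⟨hp, hs, hi⟩ := main_facts 0
  haveI := hp
  rw [MeasureTheory.integral_prod _ (integrable_Fq_prod hi hi hs hs)]
  simp only [int_mu0]
  norm_num [Fq]

lemma En_one : En Fr 1 = 89 / 24 := by
  rw [show (1:ℕ) = 0 + 1 from rfl, En_succ, En_zero, int_Fq_mu0]
  norm_num

theorem stmt17 :
    (∀ n : ℕ, En (fun t s => t * s / (t + s)) (n + 1) ≤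
        (5 / 2) * En (fun t s => t * s / (t + s)) n) ∧
    (∀ n : ℕ, 1 ≤ n → En (fun t s => t * s / (t + s)) n ≤ (89 / 60) * (5 / 2) ^ n) := by
  refine ⟨part1, ?_⟩
  intro n hn
  induction n, hn using Nat.le_induction with
  | base => rw [En_one]; norm_num
  | succ n hn ih =>
    calc En Fr (n + 1) ≤ (5 / 2) * En Fr n := part1 n
      _ ≤ (5 / 2) * ((89 / 60) * (5 / 2) ^ n) := by linarith
      _ = (89 / 60) * (5 / 2) ^ (n + 1) := by ring
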